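/- Let (Σ,σ) be a primitive Markov subshift on a countable alphabet and let A : Σ → ℝ be a bounded above, locally Hölder continuous potential with inf A|_{⋃_{i∈F}[i]} > −∞. Then there exists a unique minimal, nonnegative, bounded and locally Hölder continuous function u_A : Σ → ℝ₊ with A + u_A − u_A∘σ ≤ β_A on Σ, minimal in the sense that u_A ≤ u for every nonnegative continuous function u : Σ → ℝ₊ satisfying A + u − u∘σ ≤ β_A on Σ. -/

import Mathlib

open MeasureTheory Filter Topology Set

/-- Membership in the Markov shift: admissible transitions at every coordinate. -/
def InShift (M : ℕ → ℕ → Bool) (x : ℕ → ℕ) : Prop := ∀ j, M (x j) (x (j+1)) = true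

/-- The one-sided countable Markov shift `Σ` associated to the transition matrix `M`,
as a subtype of `ℕ → ℕ` (with the product topology, which is the topology induced by
the metric `d(x,y) = λ^{min{j : x_j ≠ y_j}}`). -/
abbrev ShiftSpace (M : ℕ → ℕ → Bool) := {x : ℕ → ℕ // InShift M x}

/-- The left shift map `σ`. -/
def shiftMap (M : ℕ → ℕ → Bool) (x : ShiftSpace M) : ShiftSpace M :=
  ⟨fun j => x.1 (j+1), fun j => x.2 (j+1)⟩

/-- `Agree M k x y` means the points `x, y` coincide on the first `k` coordinates;
for `k ≥ 1` this is exactly `d(x,y) ≤ λ^k` for the metric of the paper. -/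
def Agree (M : ℕ → ℕ → Bool) (k : ℕ) (x y : ShiftSpace M) : Prop :=
  ∀ j < k, x.1 j = y.1 j

/-- The sets `B_n` of symbols admitting admissible words of length `n+1` starting at them. -/
def BSet (M : ℕ → ℕ → Bool) : ℕ → Set ℕ
  | 0 => {i | ∃ j, M i j = true}
  | n+1 => {i | ∃ j ∈ BSet M n, M i j = true}

/-- `⋂_{n ≥ 0} B_n`. -/
def BInf (M : ℕ → ℕ → Bool) : Set ℕ := ⋂ n, BSet M n

/-- `M` is primitive with connecting set `F` and connection length `K₀`: any two symbols
of `⋂ B_n` can be joined by an admissible word of length `K₀` with all letters in `F`. -/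
def Primitive (M : ℕ → ℕ → Bool) (F : Set ℕ) (K₀ : ℕ) : Prop :=
  ∀ i ∈ BInf M, ∀ j ∈ BInf M, ∃ p : ℕ → ℕ,
    p 0 = i ∧ p (K₀ + 1) = j ∧ (∀ t, 1 ≤ t → t ≤ K₀ → p t ∈ F) ∧
    (∀ t ≤ K₀, M (p t) (p (t+1)) = true)

/-- `A` is locally Hölder continuous with constant `H`:
`Var_k(A) ≤ H ⬝ λ^k` for every `k ≥ 1`. -/
def LocHolder (M : ℕ → ℕ → Bool) (lam H : ℝ) (A : ShiftSpace M → ℝ) : Prop :=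
  ∀ k : ℕ, 1 ≤ k → ∀ x y : ShiftSpace M, Agree M k x y → A x - A y ≤ H * lam ^ k

/-- `A` is coercive: `sup A|_{[i]} → -∞` as `i → ∞`. -/
def Coercive (M : ℕ → ℕ → Bool) (A : ShiftSpace M → ℝ) : Prop :=
  ∀ C : ℝ, ∃ N : ℕ, ∀ i : ℕ, N ≤ i → ∀ x : ShiftSpace M, x.1 0 = i → A x ≤ C

/-- The union of cylinders `⋃_{i ∈ F} [i]`. -/
def FCyl (M : ℕ → ℕ → Bool) (F : Set ℕ) : Set (ShiftSpace M) := {x | x.1 0 ∈ F}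

/-- `μ` is a `σ`-invariant Borel probability measure. -/
def InvProb (M : ℕ → ℕ → Bool) (μ : Measure (ShiftSpace M)) : Prop :=
  IsProbabilityMeasure μ ∧ μ.map (shiftMap M) = μ

/-- The ergodic maximizing value `β_A = sup {∫ A dμ : μ ∈ M_σ}`. -/
noncomputable def betaA (M : ℕ → ℕ → Bool) (A : ShiftSpace M → ℝ) : ℝ :=
  sSup {r | ∃ μ : Measure (ShiftSpace M), InvProb M μ ∧ Integrable A μ ∧ ∫ x, A x ∂μ = r}

/-- The compact subshift `Σ_I` on the finite alphabet `{0, …, I}`. -/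
def SpaceI (M : ℕ → ℕ → Bool) (I : ℕ) : Set (ShiftSpace M) := {x | ∀ j, x.1 j ≤ I}

/-- `β_A(I) = max {∫ A dμ : μ ∈ M_σ, supp μ ⊆ Σ_I}`. -/
noncomputable def betaAI (M : ℕ → ℕ → Bool) (A : ShiftSpace M → ℝ) (I : ℕ) : ℝ :=
  sSup {r | ∃ μ : Measure (ShiftSpace M), InvProb M μ ∧ μ (SpaceI M I) = 1 ∧
    Integrable A μ ∧ ∫ x, A x ∂μ = r}

/-- Birkhoff sum `S_k A`. -/
noncomputable def birkhoff (M : ℕ → ℕ → Bool) (A : ShiftSpace M → ℝ) (k : ℕ)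
    (x : ShiftSpace M) : ℝ :=
  ∑ j ∈ Finset.range k, A ((shiftMap M)^[j] x)

/-- The `k`-th variation `Var_k(A)`. -/
noncomputable def VarK (M : ℕ → ℕ → Bool) (A : ShiftSpace M → ℝ) (k : ℕ) : ℝ :=
  sSup {r | ∃ x y : ShiftSpace M, Agree M k x y ∧ A x - A y = r}

/-- `Var(A) = ∑_{k ≥ 1} Var_k(A)`. -/
noncomputable def VarSum (M : ℕ → ℕ → Bool) (A : ShiftSpace M → ℝ) : ℝ :=
  ∑' k : ℕ, VarK M A (k + 1)

/-- `sup A`. -/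
noncomputable def supA (M : ℕ → ℕ → Bool) (A : ShiftSpace M → ℝ) : ℝ :=
  sSup (Set.range A)

/-- `inf A|_{⋃_{i ∈ F} [i]}`. -/
noncomputable def infF (M : ℕ → ℕ → Bool) (F : Set ℕ) (A : ShiftSpace M → ℝ) : ℝ :=
  sInf (A '' FCyl M F)

/-- The defining set for `u_A(x)`: all values `S_k(A - β_A)(y)` with `σ^k(y) = x`. -/
noncomputable def uASet (M : ℕ → ℕ → Bool) (A : ShiftSpace M → ℝ) (x : ShiftSpace M) :
    Set ℝ :=
  {r | ∃ (k : ℕ) (y : ShiftSpace M), (shiftMap M)^[k] y = x ∧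
    birkhoff M A k y - k * betaA M A = r}

/-- The candidate minimal sub-action
`u_A(x) = sup {S_k(A - β_A)(y) : k ≥ 0, σ^k(y) = x}`. -/
noncomputable def uA (M : ℕ → ℕ → Bool) (A : ShiftSpace M → ℝ) (x : ShiftSpace M) : ℝ :=
  sSup (uASet M A x)

/-- The non-wandering set `Ω(A, I)` with respect to `A|_{Σ_I}`. -/
def NonWandering (M : ℕ → ℕ → Bool) (A : ShiftSpace M → ℝ) (I : ℕ) :
    Set (ShiftSpace M) :=
  {x | x ∈ SpaceI M I ∧ ∀ ε : ℝ, 0 < ε → ∀ m : ℕ,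
    ∃ y ∈ SpaceI M I, ∃ n : ℕ, 1 ≤ n ∧ Agree M m x y ∧
      Agree M m x ((shiftMap M)^[n] y) ∧
      |birkhoff M A n y - n * betaAI M A I| < ε}

section AuxiliaryLemmas

open ENNReal


lemma integrable_dirac'' {α : Type*} [MeasurableSpace α] [MeasurableSingletonClass α]
    (f : α → ℝ) (a : α) : Integrable f (Measure.dirac a) := by
  refine (integrable_const (f a)).congr ?_
  rw [Filter.EventuallyEq, MeasureTheory.ae_dirac_eq]; simp

lemma shift_iter_apply (M : ℕ → ℕ → Bool) (m : ℕ) (x : ShiftSpace M) (j : ℕ) :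
    ((shiftMap M)^[m] x).1 j = x.1 (j + m) := by
  induction m generalizing x j with
  | zero => rfl
  | succ n ih => rw [Function.iterate_succ_apply, ih, shiftMap]; ring_nf

lemma measurable_shiftMap (M : ℕ → ℕ → Bool) : Measurable (shiftMap M) := by
  refine Measurable.subtype_mk (measurable_pi_iff.2 fun j => ?_)
  exact (measurable_pi_apply (j+1)).comp measurable_subtype_coe

lemma map_finset_sum_measure {α β : Type*} [MeasurableSpace α] [MeasurableSpace β]
    {f : α → β} (hf : Measurable f) (s : Finset ℕ) (μ : ℕ → Measure α) :
    Measure.map f (∑ i ∈ s, μ i) = ∑ i ∈ s, Measure.map f (μ i) := by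
  induction s using Finset.induction with
  | empty => simp
  | insert _ _ h ih => rw [Finset.sum_insert h, Finset.sum_insert h, Measure.map_add _ _ hf, ih]

lemma sum_range_cycle {Mo : Type*} [AddCommMonoid Mo] (f : ℕ → Mo) (n : ℕ) (hn : 0 < n)
    (hf : f n = f 0) : ∑ j ∈ Finset.range n, f (j+1) = ∑ j ∈ Finset.range n, f j := by
  obtain ⟨m, rfl⟩ := Nat.exists_eq_succ_of_ne_zero hn.ne'
  rw [Finset.sum_range_succ, Finset.sum_range_succ', hf]

lemma betaSet_bddAbove (M : ℕ → ℕ → Bool) (A : ShiftSpace M → ℝ) {b : ℝ}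
    (hb : ∀ x, A x ≤ b) :
    {r | ∃ μ : Measure (ShiftSpace M), InvProb M μ ∧ Integrable A μ ∧ ∫ x, A x ∂μ = r}
      ⊆ Set.Iic b := by
  rintro r ⟨μ, hμ, hint, rfl⟩
  haveI := hμ.1
  calc ∫ x, A x ∂μ ≤ ∫ _, b ∂μ := integral_mono hint (integrable_const b) hb
    _ = b := by simp

lemma birkhoff_le_beta (M : ℕ → ℕ → Bool) (A : ShiftSpace M → ℝ) {b : ℝ}
    (hb : ∀ x, A x ≤ b) (z : ShiftSpace M) (n : ℕ) (hn : 0 < n)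
    (hz : (shiftMap M)^[n] z = z) :
    birkhoff M A n z ≤ n * betaA M A := by
  set μ : Measure (ShiftSpace M) :=
    (n : ℝ≥0∞)⁻¹ • ∑ j ∈ Finset.range n, Measure.dirac ((shiftMap M)^[j] z) with hμdef
  have hn0 : (n : ℝ≥0∞) ≠ 0 := by exact_mod_cast hn.ne'
  have hninv : (n : ℝ≥0∞)⁻¹ ≠ ⊤ := ENNReal.inv_ne_top.2 hn0
  have hprob : IsProbabilityMeasure μ := by
    constructor
    simp only [hμdef, Measure.smul_apply, Measure.coe_finset_sum, Finset.sum_apply,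
      Measure.dirac_apply_of_mem (Set.mem_univ _), Finset.sum_const, Finset.card_range,
      nsmul_eq_mul, mul_one, smul_eq_mul]
    exact ENNReal.inv_mul_cancel hn0 (by simp)
  have hmap : μ.map (shiftMap M) = μ := by
    rw [hμdef, Measure.map_smul, map_finset_sum_measure (measurable_shiftMap M)]
    congr 1
    have : ∀ j, Measure.map (shiftMap M) (Measure.dirac ((shiftMap M)^[j] z))
        = Measure.dirac ((shiftMap M)^[j+1] z) := by
      intro j
      rw [Measure.map_dirac' (measurable_shiftMap M)]
      congr 1
      exact (Function.iterate_succ_apply' (shiftMap M) j z).symm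
    simp_rw [this]
    exact sum_range_cycle (fun j => Measure.dirac ((shiftMap M)^[j] z)) n hn
      (by rw [hz]; rfl)
  have hint : Integrable A μ := by
    refine Integrable.smul_measure ?_ hninv
    exact integrable_finset_sum_measure.2 fun i _ => integrable_dirac'' A _
  have hintegral : ∫ x, A x ∂μ = (n : ℝ)⁻¹ * birkhoff M A n z := by
    rw [hμdef, integral_smul_measure,
      integral_finset_sum_measure (fun i _ => integrable_dirac'' A _)]
    simp [birkhoff, ENNReal.toReal_inv]
  have hmem : (n : ℝ)⁻¹ * birkhoff M A n z ∈
      {r | ∃ μ : Measure (ShiftSpace M), InvProb M μ ∧ Integrable A μ ∧ ∫ x, A x ∂μ = r} :=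
    ⟨μ, ⟨hprob, hmap⟩, hint, hintegral⟩
  have hle : (n : ℝ)⁻¹ * birkhoff M A n z ≤ betaA M A :=
    le_csSup (BddAbove.mono (betaSet_bddAbove M A hb) bddAbove_Iic) hmem
  have hnpos : (0:ℝ) < n := by exact_mod_cast hn
  calc birkhoff M A n z = n * ((n:ℝ)⁻¹ * birkhoff M A n z) := by field_simp
    _ ≤ n * betaA M A := mul_le_mul_of_nonneg_left hle hnpos.le

lemma gsum_le {lam : ℝ} (h0 : 0 < lam) (h1 : lam < 1) (m : ℕ) :
    ∑ j ∈ Finset.range m, lam ^ (m - j) ≤ lam / (1 - lam) := by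
  have hre : ∑ j ∈ Finset.range m, lam ^ (m - j) = ∑ j ∈ Finset.range m, lam ^ (j + 1) := by
    rw [← Finset.sum_range_reflect]
    refine Finset.sum_congr rfl fun j hj => ?_
    have hj' := Finset.mem_range.1 hj
    congr 1
    omega
  rw [hre]
  have h2 : ∑ j ∈ Finset.range m, lam ^ (j+1) = lam * ∑ j ∈ Finset.range m, lam ^ j := by
    rw [Finset.mul_sum]; exact Finset.sum_congr rfl fun j _ => by ring
  rw [h2]
  have hg : ∑ j ∈ Finset.range m, lam ^ j ≤ 1 / (1 - lam) := by
    rw [geom_sum_eq h1.ne m]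
    have h3 : (lam^m - 1)/(lam - 1) = (1 - lam^m)/(1-lam) := by
      rw [← neg_div_neg_eq]; ring_nf
    rw [h3, div_le_div_iff₀ (by linarith) (by linarith)]
    nlinarith [pow_pos h0 m]
  calc lam * ∑ j ∈ Finset.range m, lam ^ j ≤ lam * (1 / (1-lam)) :=
        mul_le_mul_of_nonneg_left hg h0.le
    _ = lam / (1 - lam) := by ring

lemma symb_mem_BInf (M : ℕ → ℕ → Bool) (y : ShiftSpace M) (i : ℕ) : y.1 i ∈ BInf M := by
  refine Set.mem_iInter.2 fun n => ?_
  induction n generalizing i with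
  | zero => exact ⟨y.1 (i+1), y.2 i⟩
  | succ n ih => exact ⟨y.1 (i+1), ih (i+1), y.2 i⟩

lemma mk_periodic (M : ℕ → ℕ → Bool) (w : ℕ → ℕ) (n : ℕ) (hn : 0 < n)
    (hadm : ∀ a < n, M (w a) (w ((a+1) % n)) = true) :
    InShift M (fun j => w (j % n)) := by
  intro j
  have hmd := Nat.mod_add_div j n
  have e : j + 1 = j % n + 1 + n * (j / n) := by omega
  have h1 : (j+1) % n = ((j % n) + 1) % n := by rw [e, Nat.add_mul_mod_self_left]
  simp only [h1]
  exact hadm (j % n) (Nat.mod_lt _ hn)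

/-- The key uniform upper bound on `S_k A - k β_A`. -/
lemma birkhoff_bound (M : ℕ → ℕ → Bool) (F : Set ℕ) (K₀ : ℕ) (lam H : ℝ)
    (hlam₀ : 0 < lam) (hlam₁ : lam < 1) (hH : 0 ≤ H)
    (hprim : Primitive M F K₀) (A : ShiftSpace M → ℝ) (b m : ℝ)
    (hb : ∀ x, A x ≤ b) (hm : ∀ x ∈ FCyl M F, m ≤ A x)
    (hhold : LocHolder M lam H A)
    (y : ShiftSpace M) (k : ℕ) (hk : 1 ≤ k) :
    birkhoff M A k y ≤ k * betaA M A + (H * (lam/(1-lam)) + K₀ * (betaA M A - m)) := by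
  obtain ⟨p, hp0, hpK, hpF, hpM⟩ :=
    hprim (y.1 (k-1)) (symb_mem_BInf M y (k-1)) (y.1 0) (symb_mem_BInf M y 0)
  set n := k + K₀ with hn
  have hkn : k ≤ n := by omega
  have hnpos : 0 < n := by omega
  set w : ℕ → ℕ := fun t => if t < k then y.1 t else p (t - k + 1) with hw
  have hwlt : ∀ t < k, w t = y.1 t := fun t ht => if_pos ht
  have hwge : ∀ t, k ≤ t → w t = p (t - k + 1) := fun t ht => if_neg (by omega)
  have hadm : ∀ a < n, M (w a) (w ((a+1) % n)) = true := by
    intro a ha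
    rcases Nat.lt_or_ge (a+1) n with h1 | h1
    · rw [Nat.mod_eq_of_lt h1]
      rcases Nat.lt_or_ge (a+1) k with h2 | h2
      · rw [hwlt a (by omega), hwlt (a+1) h2]
        exact y.2 a
      · rcases Nat.lt_or_ge a k with h3 | h3
        · -- a = k-1, a+1 = k, so K₀ ≥ 1
          have hak : a = k - 1 := by omega
          rw [hwlt a h3, hwge (a+1) h2]
          have e1 : a + 1 - k + 1 = 1 := by omega
          rw [e1, hak, ← hp0]
          exact hpM 0 (Nat.zero_le _)
        · rw [hwge a h3, hwge (a+1) h2]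
          have : a + 1 - k + 1 = (a - k + 1) + 1 := by omega
          rw [this]
          exact hpM (a - k + 1) (by omega)
    · -- a = n - 1, (a+1) % n = 0
      have han : a = n - 1 := by omega
      have : (a+1) % n = 0 := by
        have : a + 1 = n := by omega
        simp [this]
      rw [this, hwlt 0 (by omega)]
      rcases Nat.eq_or_lt_of_le (Nat.zero_le K₀) with hK | hK
      · -- K₀ = 0, n = k, a = k-1
        have ha' : a = k - 1 := by omega
        rw [hwlt a (by omega), ha']
        have h4 := hpM 0 (Nat.zero_le _)
        rw [hp0] at h4
        have h5 : p 1 = y.1 0 := by rw [← hpK]; congr 1; omega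
        rw [h5] at h4
        exact h4
      · -- K₀ ≥ 1, a = n-1 ≥ k
        have h3 : k ≤ a := by omega
        rw [hwge a h3]
        have : a - k + 1 = K₀ := by omega
        rw [this]
        have h4 := hpM K₀ le_rfl
        rw [hpK] at h4
        exact h4
  set z : ShiftSpace M := ⟨fun j => w (j % n), mk_periodic M w n hnpos hadm⟩ with hz
  have hzt : ∀ t, z.1 t = w (t % n) := fun t => rfl
  have hzy : ∀ t < k, z.1 t = y.1 t := by
    intro t ht
    rw [hzt, Nat.mod_eq_of_lt (by omega), hwlt t ht]
  have hzper : (shiftMap M)^[n] z = z := by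
    apply Subtype.ext
    funext j
    rw [shift_iter_apply, hzt, hzt, Nat.add_mod_right]
  -- step 1 : birkhoff k y ≤ birkhoff k z + H * (lam/(1-lam))
  have step1 : birkhoff M A k y ≤ birkhoff M A k z + H * (lam/(1-lam)) := by
    have hterm : ∀ j ∈ Finset.range k,
        A ((shiftMap M)^[j] y) ≤ A ((shiftMap M)^[j] z) + H * lam ^ (k - j) := by
      intro j hj
      have hjk := Finset.mem_range.1 hj
      have hag : Agree M (k - j) ((shiftMap M)^[j] y) ((shiftMap M)^[j] z) := by
        intro i hi
        rw [shift_iter_apply, shift_iter_apply, hzy (i+j) (by omega)]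
      have := hhold (k - j) (by omega) _ _ hag
      linarith
    calc birkhoff M A k y ≤ ∑ j ∈ Finset.range k,
          (A ((shiftMap M)^[j] z) + H * lam ^ (k - j)) := Finset.sum_le_sum hterm
      _ = birkhoff M A k z + H * ∑ j ∈ Finset.range k, lam ^ (k - j) := by
          rw [Finset.sum_add_distrib, Finset.mul_sum]; rfl
      _ ≤ birkhoff M A k z + H * (lam/(1-lam)) := by
          have := gsum_le hlam₀ hlam₁ k
          nlinarith
  -- step 2 : split birkhoff n z
  have step2 : birkhoff M A n z
      = birkhoff M A k z + ∑ t ∈ Finset.range K₀, A ((shiftMap M)^[k+t] z) := by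
    rw [birkhoff, hn, Finset.sum_range_add]; rfl
  -- step 3 : tail terms bounded below by m
  have step3 : ∀ t ∈ Finset.range K₀, m ≤ A ((shiftMap M)^[k+t] z) := by
    intro t ht
    have htK := Finset.mem_range.1 ht
    refine hm _ ?_
    show ((shiftMap M)^[k+t] z).1 0 ∈ F
    rw [shift_iter_apply, hzt, Nat.zero_add, Nat.mod_eq_of_lt (by omega),
      hwge (k+t) (by omega)]
    have : k + t - k + 1 = t + 1 := by omega
    rw [this]
    exact hpF (t+1) (by omega) (by omega)
  have step3' : (K₀ : ℝ) * m ≤ ∑ t ∈ Finset.range K₀, A ((shiftMap M)^[k+t] z) := by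
    calc (K₀:ℝ) * m = ∑ _t ∈ Finset.range K₀, m := by
          rw [Finset.sum_const, Finset.card_range, nsmul_eq_mul]
      _ ≤ _ := Finset.sum_le_sum step3
  have step4 : birkhoff M A n z ≤ n * betaA M A := birkhoff_le_beta M A hb z n hnpos hzper
  have hcast : (n : ℝ) = (k : ℝ) + (K₀ : ℝ) := by exact_mod_cast rfl
  have step4' : birkhoff M A n z ≤ (k:ℝ) * betaA M A + (K₀:ℝ) * betaA M A := by
    rw [hcast, add_mul] at step4
    exact step4
  linarith [step1, step2, step3', step4']


lemma continuous_of_locHolder (M : ℕ → ℕ → Bool) {lam Hu : ℝ}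
    (hlam₀ : 0 < lam) (hlam₁ : lam < 1) (u : ShiftSpace M → ℝ)
    (h : LocHolder M lam Hu u) : Continuous u := by
  refine continuous_iff_continuousAt.2 fun x => ?_
  rw [ContinuousAt, Metric.tendsto_nhds]
  intro ε hε
  have htend : Tendsto (fun k : ℕ => Hu * lam ^ k) atTop (𝓝 0) := by
    have := (tendsto_pow_atTop_nhds_zero_of_lt_one hlam₀.le hlam₁).const_mul Hu
    simpa using this
  obtain ⟨N, hN⟩ := (Metric.tendsto_atTop.1 htend) ε hε
  set k := max N 1 with hkdef
  have hk1 : 1 ≤ k := le_max_right _ _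
  have hkN : N ≤ k := le_max_left _ _
  have hdist := hN k hkN
  rw [Real.dist_eq, sub_zero] at hdist
  have hbnd : Hu * lam ^ k < ε := lt_of_le_of_lt (le_abs_self _) hdist
  have hUopen : IsOpen {y : ShiftSpace M | ∀ j < k, y.1 j = x.1 j} := by
    have heq : {y : ShiftSpace M | ∀ j < k, y.1 j = x.1 j}
        = ⋂ j ∈ Finset.range k, {y : ShiftSpace M | y.1 j = x.1 j} := by
      ext y; simp [Finset.mem_range]
    rw [heq]
    refine isOpen_biInter_finset fun j _ => ?_
    have hc : Continuous (fun y : ShiftSpace M => y.1 j) :=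
      (continuous_apply j).comp continuous_subtype_val
    exact hc.isOpen_preimage {x.1 j} (isOpen_discrete _)
  have hUmem : {y : ShiftSpace M | ∀ j < k, y.1 j = x.1 j} ∈ 𝓝 x :=
    hUopen.mem_nhds (fun j _ => rfl)
  filter_upwards [hUmem] with y hy
  have h1 := h k hk1 x y (fun j hj => (hy j hj).symm)
  have h2 := h k hk1 y x (fun j hj => hy j hj)
  rw [Real.dist_eq]
  have habs : |u y - u x| ≤ Hu * lam ^ k := abs_sub_le_iff.2 ⟨h2, h1⟩
  exact lt_of_le_of_lt habs hbnd

end AuxiliaryLemmas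

/-- For a primitive countable Markov shift and a bounded above, locally
Hölder potential `A` with `inf A|_{⋃_{i∈F}[i]} > -∞`, there is a unique minimal,
nonnegative, bounded, locally Hölder sub-action `u_A`. -/
theorem exists_unique_minimal_subaction
    (M : ℕ → ℕ → Bool) (F : Set ℕ) (K₀ : ℕ) (lam H : ℝ)
    (hlam₀ : 0 < lam) (hlam₁ : lam < 1) (hH : 0 < H)
    (hprim : Primitive M F K₀)
    (A : ShiftSpace M → ℝ)
    (hbdd : BddAbove (Set.range A))
    (hbelow : BddBelow (A '' FCyl M F))
    (hhold : LocHolder M lam H A) :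
    ∃! u : ShiftSpace M → ℝ,
      (∀ x, 0 ≤ u x) ∧
      BddAbove (Set.range u) ∧
      (∃ Hu : ℝ, 0 < Hu ∧ LocHolder M lam Hu u) ∧
      (∀ x, A x + u x - u (shiftMap M x) ≤ betaA M A) ∧
      (∀ v : ShiftSpace M → ℝ, Continuous v → (∀ x, 0 ≤ v x) →
        (∀ x, A x + v x - v (shiftMap M x) ≤ betaA M A) →
        ∀ x, u x ≤ v x) := by
  classical
  obtain ⟨b, hb0⟩ := hbdd
  have hb : ∀ x, A x ≤ b := fun x => hb0 ⟨x, rfl⟩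
  obtain ⟨m, hm0⟩ := hbelow
  have hm : ∀ x ∈ FCyl M F, m ≤ A x := fun x hx => hm0 ⟨x, hx, rfl⟩
  set C : ℝ := H * (lam/(1-lam)) + K₀ * (betaA M A - m) with hCdef
  set C' : ℝ := max C 0 with hC'def
  have hbound : ∀ (y : ShiftSpace M) (k : ℕ), birkhoff M A k y - k * betaA M A ≤ C' := by
    intro y k
    rcases Nat.eq_zero_or_pos k with rfl | hk
    · simp only [birkhoff, Finset.range_zero, Finset.sum_empty, Nat.cast_zero, zero_mul,
        sub_zero]
      exact le_max_right C 0
    · have h1 := birkhoff_bound M F K₀ lam H hlam₀ hlam₁ hH.le hprim A b m hb hm hhold y k hk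
      have h2 : C ≤ C' := le_max_left _ _
      rw [hCdef] at h2
      linarith
  have h0mem : ∀ x, (0:ℝ) ∈ uASet M A x := fun x => ⟨0, x, rfl, by simp [birkhoff]⟩
  have hne : ∀ x, (uASet M A x).Nonempty := fun x => ⟨0, h0mem x⟩
  have hbdds : ∀ x, BddAbove (uASet M A x) := by
    intro x
    refine ⟨C', ?_⟩
    rintro r ⟨k, y, hy, rfl⟩
    exact hbound y k
  have hnonneg : ∀ x, 0 ≤ uA M A x := fun x => le_csSup (hbdds x) (h0mem x)
  have hleC : ∀ x, uA M A x ≤ C' := fun x => csSup_le (hne x)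
    (by rintro r ⟨k, y, hy, rfl⟩; exact hbound y k)
  -- the sub-action property
  have hmemstep : ∀ x r, r ∈ uASet M A x →
      A x + r - betaA M A ∈ uASet M A (shiftMap M x) := by
    rintro x r ⟨k, y, hy, rfl⟩
    refine ⟨k+1, y, ?_, ?_⟩
    · rw [Function.iterate_succ_apply', hy]
    · have h2 : birkhoff M A (k+1) y = birkhoff M A k y + A ((shiftMap M)^[k] y) :=
        Finset.sum_range_succ _ _
      rw [h2, hy]
      push_cast
      ring
  have hsub : ∀ x, A x + uA M A x - uA M A (shiftMap M x) ≤ betaA M A := by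
    intro x
    have h3 : uA M A x ≤ uA M A (shiftMap M x) + betaA M A - A x := by
      refine csSup_le (hne x) fun r hr => ?_
      have h1 : A x + r - betaA M A ≤ uA M A (shiftMap M x) :=
        le_csSup (hbdds _) (hmemstep x r hr)
      linarith
    linarith
  -- minimality (continuity of the competitor is not needed)
  have hmin : ∀ v : ShiftSpace M → ℝ, (∀ x, 0 ≤ v x) →
      (∀ x, A x + v x - v (shiftMap M x) ≤ betaA M A) → ∀ x, uA M A x ≤ v x := by
    intro v hv hvs x
    refine csSup_le (hne x) ?_
    rintro r ⟨k, y, hy, rfl⟩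
    have key : ∀ j : ℕ, birkhoff M A j y - j * betaA M A ≤ v ((shiftMap M)^[j] y) - v y := by
      intro j
      induction j with
      | zero => simp [birkhoff]
      | succ i ih =>
        have h1 := hvs ((shiftMap M)^[i] y)
        have h2 : birkhoff M A (i+1) y = birkhoff M A i y + A ((shiftMap M)^[i] y) :=
          Finset.sum_range_succ _ _
        rw [Function.iterate_succ_apply']
        push_cast
        push_cast at ih
        linarith
    have h4 := key k
    rw [hy] at h4
    have h5 := hv y
    linarith
  -- local Hölder continuity of uA
  set Hu : ℝ := H * (lam/(1-lam)) with hHudef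
  have hHu : 0 < Hu := mul_pos hH (div_pos hlam₀ (by linarith))
  have hhu : LocHolder M lam Hu (uA M A) := by
    intro k hk x y hagree
    have hmain : uA M A x ≤ uA M A y + Hu * lam ^ k := by
      refine csSup_le (hne x) ?_
      rintro r ⟨mm, z, hz, rfl⟩
      -- modify the preimage z of x into a preimage z' of y
      set zf : ℕ → ℕ := fun t => if t < mm then z.1 t else y.1 (t - mm) with hzf
      have hzx : ∀ t, z.1 (t + mm) = x.1 t := by
        intro t
        rw [← hz, shift_iter_apply]
      have hzin : InShift M zf := by
        intro t
        rcases lt_trichotomy (t+1) mm with h1 | h1 | h1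
        · show M (zf t) (zf (t+1)) = true
          simp only [hzf]
          rw [if_pos (by omega), if_pos h1]
          exact z.2 t
        · have hx0 : z.1 mm = y.1 0 := by
            have h2 : z.1 (0 + mm) = x.1 0 := hzx 0
            have h3 := hagree 0 (by omega)
            rw [Nat.zero_add] at h2
            rw [h2, h3]
          show M (zf t) (zf (t+1)) = true
          simp only [hzf]
          rw [if_pos (by omega), if_neg (by omega)]
          have e1 : t + 1 - mm = 0 := by omega
          rw [e1, ← hx0, ← h1]
          exact z.2 t
        · show M (zf t) (zf (t+1)) = true
          simp only [hzf]
          rw [if_neg (by omega), if_neg (by omega)]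
          have e1 : t + 1 - mm = (t - mm) + 1 := by omega
          rw [e1]
          exact y.2 (t - mm)
      set z' : ShiftSpace M := ⟨zf, hzin⟩ with hz'
      have hz'y : (shiftMap M)^[mm] z' = y := by
        apply Subtype.ext
        funext j
        rw [shift_iter_apply]
        show zf (j + mm) = y.1 j
        simp only [hzf]
        rw [if_neg (by omega)]
        have e : j + mm - mm = j := by omega
        rw [e]
      have hterm : ∀ j ∈ Finset.range mm,
          A ((shiftMap M)^[j] z) ≤ A ((shiftMap M)^[j] z') + H * lam ^ (k + (mm - j)) := by
        intro j hj
        have hjm := Finset.mem_range.1 hj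
        have hag : Agree M (k + (mm - j)) ((shiftMap M)^[j] z) ((shiftMap M)^[j] z') := by
          intro i hi
          rw [shift_iter_apply, shift_iter_apply]
          show z.1 (i + j) = zf (i + j)
          simp only [hzf]
          by_cases hc : i + j < mm
          · rw [if_pos hc]
          · rw [if_neg hc]
            have h6 : z.1 (i + j) = x.1 (i + j - mm) := by
              rw [← hzx (i + j - mm)]
              have e : i + j - mm + mm = i + j := by omega
              rw [e]
            rw [h6]
            exact hagree (i + j - mm) (by omega)
        have h7 := hhold (k + (mm - j)) (by omega) _ _ hag
        linarith
      have hsumle : birkhoff M A mm z ≤ birkhoff M A mm z' + Hu * lam ^ k := by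
        have h8 : birkhoff M A mm z ≤ ∑ j ∈ Finset.range mm,
            (A ((shiftMap M)^[j] z') + H * lam ^ (k + (mm - j))) := Finset.sum_le_sum hterm
        have h9 : ∑ j ∈ Finset.range mm,
            (A ((shiftMap M)^[j] z') + H * lam ^ (k + (mm - j)))
            = birkhoff M A mm z' + H * (lam ^ k * ∑ j ∈ Finset.range mm, lam ^ (mm - j)) := by
          rw [Finset.sum_add_distrib]
          have hh9 : ∑ j ∈ Finset.range mm, H * lam ^ (k + (mm - j))
              = H * (lam ^ k * ∑ j ∈ Finset.range mm, lam ^ (mm - j)) := by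
            rw [Finset.mul_sum, Finset.mul_sum]
            refine Finset.sum_congr rfl fun j _ => ?_
            rw [pow_add]
          rw [hh9]
          rfl
        have h10 : ∑ j ∈ Finset.range mm, lam ^ (mm - j) ≤ lam / (1 - lam) :=
          gsum_le hlam₀ hlam₁ mm
        have h11 : H * (lam ^ k * ∑ j ∈ Finset.range mm, lam ^ (mm - j))
            ≤ Hu * lam ^ k := by
          have hp : (0:ℝ) ≤ H * lam ^ k := mul_nonneg hH.le (pow_pos hlam₀ k).le
          have h11' := mul_le_mul_of_nonneg_left h10 hp
          calc H * (lam ^ k * ∑ j ∈ Finset.range mm, lam ^ (mm - j))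
              = H * lam ^ k * ∑ j ∈ Finset.range mm, lam ^ (mm - j) := by ring
            _ ≤ H * lam ^ k * (lam / (1 - lam)) := h11'
            _ = Hu * lam ^ k := by rw [hHudef]; ring
        linarith [h8, h9.le, h9.ge, h11]
      have h12 : birkhoff M A mm z' - mm * betaA M A ≤ uA M A y :=
        le_csSup (hbdds y) ⟨mm, z', hz'y, rfl⟩
      linarith
    linarith
  refine ⟨uA M A, ⟨hnonneg, ⟨C', by rintro _ ⟨x, rfl⟩; exact hleC x⟩,
    ⟨Hu, hHu, hhu⟩, hsub, fun v _ hv hvs x => hmin v hv hvs x⟩, ?_⟩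
  rintro u' ⟨h1', h2', ⟨Hu', hHu', hh'⟩, h4', h5'⟩
  funext x
  apply le_antisymm
  · exact h5' (uA M A) (continuous_of_locHolder M hlam₀ hlam₁ (uA M A) hhu) hnonneg hsub x
  · exact hmin u' h1' h4' x
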